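/- Let Λ be a symmetric positive definite N×N matrix, Φ an invertible N×N matrix, and Q a symmetric positive semidefinite N×N matrix such that Q + Φ Λ⁻¹ Φᵀ is invertible. Then (Q + Φ Λ⁻¹ Φᵀ)⁻¹ Φ v = 0 for every vector v in the null space of Λ; equivalently, the null space of the propagated information matrix (Q + Φ Λ⁻¹ Φᵀ)⁻¹ contains Φ·(null space of Λ). -/

import Mathlib

open Matrix

/-- Information propagation preserves (and transports) the null space:
for Q symmetric positive definite, Φ invertible, Λ symmetric PSD,
ker(Q⁻¹ - Q⁻¹(Q⁻¹ + Φ⁻ᵀΛΦ⁻¹)⁻¹Q⁻¹) = Φ · ker(Λ). -/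
theorem stmt1 (N : ℕ) (Λ Q Φ : Matrix (Fin N) (Fin N) ℝ)
    (hΛ : Λ.PosSemidef) (hQ : Q.PosDef) (hΦ : IsUnit Φ) :
    LinearMap.ker (Q⁻¹ - Q⁻¹ * (Q⁻¹ + (Φ⁻¹)ᵀ * Λ * Φ⁻¹)⁻¹ * Q⁻¹).mulVecLin
      = Submodule.map Φ.mulVecLin (LinearMap.ker Λ.mulVecLin) := by
  set M : Matrix (Fin N) (Fin N) ℝ := Q⁻¹ + (Φ⁻¹)ᵀ * Λ * Φ⁻¹ with hMdef
  have hQi : (Q⁻¹).PosDef := hQ.inv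
  have hPSD : ((Φ⁻¹)ᵀ * Λ * Φ⁻¹).PosSemidef := by
    have := hΛ.conjTranspose_mul_mul_same (Φ⁻¹)
    rwa [conjTranspose_eq_transpose_of_trivial] at this
  have hM : M.PosDef := hQi.add_posSemidef hPSD
  have hMu : IsUnit M := hM.isUnit
  have hMinv : M⁻¹ * M = 1 := nonsing_inv_mul M ((isUnit_iff_isUnit_det M).mp hMu)
  have key : Q⁻¹ - Q⁻¹ * M⁻¹ * Q⁻¹ = (Q⁻¹ * M⁻¹ * (Φ⁻¹)ᵀ) * (Λ * Φ⁻¹) := by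
    have : (Q⁻¹ * M⁻¹ * (Φ⁻¹)ᵀ) * (Λ * Φ⁻¹) = Q⁻¹ * M⁻¹ * (M - Q⁻¹) := by
      rw [hMdef, add_sub_cancel_left]; noncomm_ring
    rw [this, Matrix.mul_sub, Matrix.mul_assoc Q⁻¹ M⁻¹ M, hMinv, Matrix.mul_one]
  rw [key, Matrix.mulVecLin_mul, LinearMap.ker_comp]
  have hP : IsUnit (Q⁻¹ * M⁻¹ * (Φ⁻¹)ᵀ) := by
    refine ((isUnit_nonsing_inv_iff.mpr hQ.isUnit).mul
      (isUnit_nonsing_inv_iff.mpr hMu)).mul ?_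
    exact (Matrix.isUnit_transpose _).mpr (isUnit_nonsing_inv_iff.mpr hΦ)
  have hPker : LinearMap.ker (Q⁻¹ * M⁻¹ * (Φ⁻¹)ᵀ).mulVecLin = ⊥ := by
    rw [LinearMap.ker_eq_bot]
    exact (Matrix.mulVec_injective_iff_isUnit.mpr hP)
  rw [hPker, Submodule.comap_bot, Matrix.mulVecLin_mul, LinearMap.ker_comp]
  -- now: comap (Φ⁻¹).mulVecLin (ker Λ.mulVecLin) = map Φ.mulVecLin (ker Λ.mulVecLin)
  ext x
  simp only [Submodule.mem_comap, Submodule.mem_map, LinearMap.mem_ker,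
    mulVecLin_apply]
  constructor
  · intro h
    refine ⟨Φ⁻¹ *ᵥ x, h, ?_⟩
    rw [mulVec_mulVec, mul_nonsing_inv Φ ((isUnit_iff_isUnit_det Φ).mp hΦ), one_mulVec]
  · rintro ⟨y, hy, rfl⟩
    have h1 : Φ⁻¹ *ᵥ Φ *ᵥ y = y := by
      rw [mulVec_mulVec, nonsing_inv_mul Φ ((isUnit_iff_isUnit_det Φ).mp hΦ), one_mulVec]
    rw [h1, hy]
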